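/- Exact probability that a given node is isolated in g(n,r,p) (step in the proof of Theorem 9). Fix n ≥ 1, r > 0, and p ∈ (0,1]. Then the probability that node v₁ is isolated (has no incident edges) in g(n,r,p) equals ∫_{S₀} (1 − ν(B(X,r)) p)^{n−1} dm(X). -/

import Mathlib

open MeasureTheory Metric Finset
open scoped ENNReal

noncomputable section

abbrev Pt : Type := EuclideanSpace ℝ (Fin 2)

def pt (x y : ℝ) : Pt := (WithLp.equiv 2 (Fin 2 → ℝ)).symm ![x, y]

def S0 : Set Pt := {X | X 0 ∈ Set.Icc (-(1:ℝ)/2) (1/2) ∧ X 1 ∈ Set.Icc (-(1:ℝ)/2) (1/2)}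

def gridPt (s : ℕ) (ij : Fin s × Fin s) : Pt :=
  pt (((ij.1 : ℝ) + 1/2) / s - 1/2) (((ij.2 : ℝ) + 1/2) / s - 1/2)

/-- The joint distribution of `n` nodes placed i.i.d. uniformly on `S₀`. -/
def μunif (n : ℕ) : Measure (Fin n → Pt) := Measure.pi fun _ => volume.restrict S0

/-- `ν(F)`: the area (Lebesgue measure) of `F ∩ S₀`. -/
def nu (F : Set Pt) : ℝ := (volume (F ∩ S0)).toReal

/-- Coverage probability of the random network `g(n, r)`. -/
def pcovRand (n : ℕ) (r : ℝ) : ℝ :=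
  (μunif n {ω | ∀ u ∈ S0, ∃ i, dist (ω i) u ≤ r}).toReal

/-- The Bernoulli(p) measure on Bool. -/
def bern (p : ℝ) : Measure Bool :=
  ENNReal.ofReal p • Measure.dirac true + ENNReal.ofReal (1 - p) • Measure.dirac false

/-- Sample space measure for `g(n, r, p)`: node positions are i.i.d. uniform on `S₀`,
and each unordered pair of nodes carries an independent Bernoulli(p) indicator. -/
def μgraph (n : ℕ) (p : ℝ) : Measure ((Fin n → Pt) × (Sym2 (Fin n) → Bool)) :=
  (Measure.pi fun _ : Fin n => volume.restrict S0).prod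
    (Measure.pi fun _ : Sym2 (Fin n) => bern p)

/-- Adjacency in `g(n, r, p)`: nodes `i ≠ j` are joined iff they are within distance `r`
and the pair's Bernoulli indicator equals `true`. -/
def adj (n : ℕ) (r : ℝ) (ω : (Fin n → Pt) × (Sym2 (Fin n) → Bool)) (i j : Fin n) : Prop :=
  i ≠ j ∧ dist (ω.1 i) (ω.1 j) ≤ r ∧ ω.2 s(i, j) = true

/-- Probability that `g(n, r, p)` is disconnected. -/
def pdisc (n : ℕ) (r p : ℝ) : ℝ :=
  (μgraph n p {ω | ¬ ∀ i j : Fin n, Relation.ReflTransGen (adj n r ω) i j}).toReal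

lemma S0_eq : S0 = (MeasurableEquiv.toLp 2 (Fin 2 → ℝ)).symm ⁻¹'
    (Set.pi Set.univ fun _ => Set.Icc (-(1:ℝ)/2) (1/2)) := by
  ext X
  simp only [Set.mem_preimage, Set.mem_pi, Set.mem_univ, true_implies]
  rw [Fin.forall_fin_two]
  exact Iff.rfl

lemma S0_measurable : MeasurableSet S0 := by
  rw [S0_eq]
  exact (MeasurableEquiv.toLp 2 (Fin 2 → ℝ)).symm.measurable
    (MeasurableSet.univ_pi fun _ => measurableSet_Icc)

lemma volume_S0 : volume S0 = 1 := by
  rw [S0_eq, (EuclideanSpace.volume_preserving_symm_measurableEquiv_toLp (Fin 2)).measure_preimage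
    (MeasurableSet.univ_pi fun _ => measurableSet_Icc).nullMeasurableSet]
  rw [volume_pi_pi]
  simp [Real.volume_Icc]
  norm_num

instance (p : ℝ) : IsFiniteMeasure (bern p) := by
  constructor
  simp only [bern, Measure.add_apply, Measure.smul_apply, smul_eq_mul,
    Measure.dirac_apply_of_mem (Set.mem_univ _), mul_one]
  exact ENNReal.add_lt_top.2 ⟨ENNReal.ofReal_lt_top, ENNReal.ofReal_lt_top⟩

lemma bern_univ {p : ℝ} (h0 : 0 ≤ p) (h1 : p ≤ 1) : bern p Set.univ = 1 := by
  simp only [bern, Measure.add_apply, Measure.smul_apply, smul_eq_mul,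
    Measure.dirac_apply_of_mem (Set.mem_univ _), mul_one]
  rw [← ENNReal.ofReal_add h0 (by linarith)]
  norm_num

lemma bern_false (p : ℝ) : bern p {false} = ENNReal.ofReal (1 - p) := by
  simp [bern, Measure.dirac_apply' _ (measurableSet_singleton _)]

lemma nu_nonneg (F : Set Pt) : 0 ≤ nu F := ENNReal.toReal_nonneg

lemma vol_inter_le_one (F : Set Pt) : volume (F ∩ S0) ≤ 1 := by
  rw [← volume_S0]; exact measure_mono Set.inter_subset_right

lemma vol_inter_ne_top (F : Set Pt) : volume (F ∩ S0) ≠ ⊤ :=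
  ne_top_of_le_ne_top ENNReal.one_ne_top (vol_inter_le_one F)

lemma nu_le_one (F : Set Pt) : nu F ≤ 1 := by
  have := ENNReal.toReal_mono ENNReal.one_ne_top (vol_inter_le_one F)
  simpa [nu] using this

lemma measurable_vol_cb (r : ℝ) :
    Measurable fun a : Pt => volume (closedBall a r ∩ S0) := by
  have hset : MeasurableSet {q : Pt × Pt | dist q.1 q.2 ≤ r} :=
    measurableSet_le measurable_dist measurable_const
  have hf : Measurable fun q : Pt × Pt =>
      ({q : Pt × Pt | dist q.1 q.2 ≤ r}).indicator (fun _ => (1:ℝ≥0∞)) q :=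
    measurable_const.indicator hset
  have key : ∀ a : Pt, volume (closedBall a r ∩ S0) =
      ∫⁻ y, ({q : Pt × Pt | dist q.1 q.2 ≤ r}).indicator (fun _ => (1:ℝ≥0∞)) (a, y)
        ∂(volume.restrict S0) := by
    intro a
    have : ∀ y : Pt, ({q : Pt × Pt | dist q.1 q.2 ≤ r}).indicator (fun _ => (1:ℝ≥0∞)) (a, y)
        = (closedBall a r).indicator (fun _ => (1:ℝ≥0∞)) y := by
      intro y
      classical
      rw [Set.indicator_apply, Set.indicator_apply]
      simp only [Set.mem_setOf_eq, mem_closedBall, dist_comm a y]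
    simp_rw [this]
    rw [lintegral_indicator measurableSet_closedBall]
    simp [Measure.restrict_apply measurableSet_closedBall]
  simp_rw [key]
  exact Measurable.lintegral_prod_right' hf

lemma measurable_nu_cb (r : ℝ) : Measurable fun a : Pt => nu (closedBall a r) :=
  (measurable_vol_cb r).ennreal_toReal

lemma lintegral_pi_pow {α : Type*} [MeasurableSpace α] (μ : Measure α) [SigmaFinite μ]
    (m : ℕ) (f : α → ℝ≥0∞) (hf : Measurable f) :
    ∫⁻ y, (∏ j, f (y j)) ∂(Measure.pi fun _ : Fin m => μ) = (∫⁻ z, f z ∂μ) ^ m := by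
  induction m with
  | zero => simp [lintegral_one, Measure.pi_univ]
  | succ m ih =>
    have hmp := measurePreserving_piFinSuccAbove (fun _ : Fin (m+1) => μ) 0
    have hemb := (MeasurableEquiv.piFinSuccAbove (fun _ : Fin (m+1) => α) 0).measurableEmbedding
    have := hmp.lintegral_comp_emb hemb
      (f := fun q : α × (Fin m → α) => f q.1 * ∏ j, f (q.2 j))
    rw [show (∫⁻ y, (∏ j, f (y j)) ∂(Measure.pi fun _ : Fin (m+1) => μ))
        = ∫⁻ y, (fun q : α × (Fin m → α) => f q.1 * ∏ j, f (q.2 j))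
              ((MeasurableEquiv.piFinSuccAbove (fun _ : Fin (m+1) => α) 0) y)
            ∂(Measure.pi fun _ : Fin (m+1) => μ) from ?_, this]
    · rw [lintegral_prod_mul hf.aemeasurable
        (Finset.measurable_prod Finset.univ fun j _ =>
          hf.comp (measurable_pi_apply j) : Measurable fun ys : Fin m → α => ∏ j, f (ys j)).aemeasurable]
      rw [ih]
      ring
    · congr 1
      funext y
      simp only [MeasurableEquiv.piFinSuccAbove_apply]
      rw [Fin.prod_univ_succ]
      rfl

lemma lintegral_g {p : ℝ} (r : ℝ) (hp0 : 0 ≤ p) (hp1 : p ≤ 1) (a : Pt) :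
    ∫⁻ y, (if dist a y ≤ r then ENNReal.ofReal (1 - p) else 1) ∂(volume.restrict S0)
      = ENNReal.ofReal (1 - p * nu (closedBall a r)) := by
  classical
  have hcb : MeasurableSet (closedBall a r) := measurableSet_closedBall
  have hfun : ∀ y : Pt, (if dist a y ≤ r then ENNReal.ofReal (1 - p) else 1)
      = (closedBall a r).indicator (fun _ => ENNReal.ofReal (1 - p)) y
        + ((closedBall a r)ᶜ).indicator (fun _ => (1:ℝ≥0∞)) y := by
    intro y
    by_cases h : dist a y ≤ r
    · have h' : dist y a ≤ r := dist_comm a y ▸ h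
      simp [Set.indicator_apply, mem_closedBall, h, h', not_lt.2 h']
    · have h' : ¬ dist y a ≤ r := fun hc => h (dist_comm a y ▸ hc)
      simp [Set.indicator_apply, mem_closedBall, h, h', not_le.1 h']
  simp_rw [hfun]
  rw [lintegral_add_left (measurable_const.indicator hcb)]
  rw [lintegral_indicator_const hcb, lintegral_indicator_const hcb.compl]
  rw [Measure.restrict_apply hcb, Measure.restrict_apply hcb.compl]
  have hdiff : (closedBall a r)ᶜ ∩ S0 = S0 \ (closedBall a r ∩ S0) := by
    ext z; simp [Set.mem_diff]; tauto
  have hA := vol_inter_ne_top (closedBall a r)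
  rw [hdiff, measure_diff Set.inter_subset_right
    (hcb.inter S0_measurable).nullMeasurableSet hA, volume_S0]
  set A := volume (closedBall a r ∩ S0) with hAdef
  have hAof : A = ENNReal.ofReal (nu (closedBall a r)) := by
    rw [nu, ENNReal.ofReal_toReal hA]
  have h1 : (1:ℝ≥0∞) - A = ENNReal.ofReal (1 - nu (closedBall a r)) := by
    rw [hAof, ← ENNReal.ofReal_one, ← ENNReal.ofReal_sub _ (nu_nonneg _)]
  rw [one_mul, h1, hAof, ← ENNReal.ofReal_mul (by linarith)]
  rw [← ENNReal.ofReal_add (by nlinarith [nu_nonneg (closedBall a r)])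
    (by nlinarith [nu_le_one (closedBall a r)])]
  congr 1
  ring

lemma bern_pi_event (m : ℕ) {p : ℝ} (r : ℝ) (hp0 : 0 ≤ p) (hp1 : p ≤ 1)
    (x : Fin (m+1) → Pt) :
    (Measure.pi fun _ : Sym2 (Fin (m+1)) => bern p)
      {b | ∀ j : Fin (m+1), j ≠ 0 → ¬ (dist (x 0) (x j) ≤ r ∧ b s(0, j) = true)}
    = ENNReal.ofReal
        (∏ j : Fin (m+1), if j ≠ (0:Fin (m+1)) ∧ dist (x 0) (x j) ≤ r then 1 - p else 1) := by
  classical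
  set E : Finset (Sym2 (Fin (m+1))) :=
    (Finset.univ.filter fun j : Fin (m+1) => j ≠ 0 ∧ dist (x 0) (x j) ≤ r).image
      (fun j => s((0:Fin (m+1)), j)) with hE
  have hset : {b : Sym2 (Fin (m+1)) → Bool |
        ∀ j : Fin (m+1), j ≠ 0 → ¬ (dist (x 0) (x j) ≤ r ∧ b s(0, j) = true)}
      = Set.pi Set.univ (fun e => if e ∈ E then ({false} : Set Bool) else Set.univ) := by
    ext b
    simp only [Set.mem_setOf_eq, Set.mem_pi, Set.mem_univ, true_implies]
    constructor
    · intro h e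
      by_cases he : e ∈ E
      · obtain ⟨j, hj, rfl⟩ := Finset.mem_image.1 he
        obtain ⟨hj0, hjd⟩ := (Finset.mem_filter.1 hj).2
        have := h j hj0
        simp only [he, if_true, Set.mem_singleton_iff]
        cases hb : b s((0:Fin (m+1)), j) with
        | false => rfl
        | true => exact absurd ⟨hjd, hb⟩ this
      · simp [he]
    · intro h j hj0 hc
      have hmem : s((0:Fin (m+1)), j) ∈ E :=
        Finset.mem_image.2 ⟨j, Finset.mem_filter.2 ⟨Finset.mem_univ _, hj0, hc.1⟩, rfl⟩
      have := h s((0:Fin (m+1)), j)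
      rw [if_pos hmem] at this
      rw [Set.mem_singleton_iff] at this
      rw [hc.2] at this
      exact Bool.noConfusion this
  rw [hset, Measure.pi_pi]
  have hprod : ∀ e : Sym2 (Fin (m+1)),
      bern p (if e ∈ E then ({false} : Set Bool) else Set.univ)
        = if e ∈ E then ENNReal.ofReal (1 - p) else 1 := by
    intro e
    by_cases he : e ∈ E
    · rw [if_pos he, if_pos he]; exact bern_false p
    · rw [if_neg he, if_neg he]; exact bern_univ hp0 hp1
  simp_rw [hprod]
  rw [Finset.prod_ite_mem Finset.univ E (fun _ => ENNReal.ofReal (1 - p)),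
    Finset.univ_inter, Finset.prod_const]
  have hcard : E.card
      = (Finset.univ.filter fun j : Fin (m+1) => j ≠ 0 ∧ dist (x 0) (x j) ≤ r).card := by
    rw [hE]
    apply Finset.card_image_of_injOn
    intro j hj j' hj' hss
    have hj0 := ((Finset.mem_filter.1 hj).2).1
    have hj0' := ((Finset.mem_filter.1 hj').2).1
    rcases Sym2.eq_iff.1 hss with ⟨-, h2⟩ | ⟨h1, h2⟩
    · exact h2
    · exact absurd h1.symm hj0'
  rw [hcard, ← ENNReal.ofReal_pow (by linarith)]
  congr 1
  rw [← Finset.prod_const, Finset.prod_filter]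

/-- Step in the proof of Theorem 9: the probability that node `v₁` is isolated in
`g(n, r, p)` equals `∫_{S₀} (1 - ν(B(X, r))·p)^(n-1) dm(X)`. -/
theorem isolated_node_probability
    (n : ℕ) (hn : 0 < n) (r : ℝ) (hr : 0 < r) (p : ℝ) (hp : p ∈ Set.Ioc (0:ℝ) 1) :
    (μgraph n p {ω | ∀ j : Fin n, j ≠ ⟨0, hn⟩ → ¬ adj n r ω ⟨0, hn⟩ j}).toReal =
      ∫ X in S0, (1 - nu (closedBall X r) * p) ^ (n - 1) := by
  classical
  obtain ⟨hp0, hp1⟩ := hp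
  obtain ⟨m, rfl⟩ : ∃ m, n = m + 1 := ⟨n - 1, (Nat.succ_pred_eq_of_pos hn).symm⟩
  have h0 : (⟨0, hn⟩ : Fin (m+1)) = 0 := rfl
  set T : Set ((Fin (m+1) → Pt) × (Sym2 (Fin (m+1)) → Bool)) :=
    {ω | ∀ j : Fin (m+1), j ≠ 0 → ¬ (dist (ω.1 0) (ω.1 j) ≤ r ∧ ω.2 s(0, j) = true)} with hT
  have hSeq : {ω : (Fin (m+1) → Pt) × (Sym2 (Fin (m+1)) → Bool) |
      ∀ j : Fin (m+1), j ≠ ⟨0, hn⟩ → ¬ adj (m+1) r ω ⟨0, hn⟩ j} = T := by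
    ext ω
    simp only [hT, Set.mem_setOf_eq, adj, h0]
    constructor
    · intro h j hj hc
      exact h j hj ⟨Ne.symm hj, hc.1, hc.2⟩
    · intro h j hj hc
      exact h j hj ⟨hc.2.1, hc.2.2⟩
  have hd : ∀ j : Fin (m+1), MeasurableSet
      {ω : (Fin (m+1) → Pt) × (Sym2 (Fin (m+1)) → Bool) | dist (ω.1 0) (ω.1 j) ≤ r} :=
    fun j => measurableSet_le (measurable_dist.comp
      (((measurable_pi_apply 0).comp measurable_fst).prodMk
        ((measurable_pi_apply j).comp measurable_fst))) measurable_const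
  have hb : ∀ j : Fin (m+1), MeasurableSet
      {ω : (Fin (m+1) → Pt) × (Sym2 (Fin (m+1)) → Bool) | ω.2 s(0, j) = true} :=
    fun j => by
      have h : {ω : (Fin (m+1) → Pt) × (Sym2 (Fin (m+1)) → Bool) | ω.2 s(0, j) = true}
          = (fun ω : (Fin (m+1) → Pt) × (Sym2 (Fin (m+1)) → Bool) => ω.2 s(0, j)) ⁻¹'
            {true} := rfl
      rw [h]
      exact ((measurable_pi_apply s((0:Fin (m+1)), j)).comp measurable_snd)
        (measurableSet_singleton true)
  have hTm : MeasurableSet T := by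
    have : T = ⋂ j : Fin (m+1), ⋂ (_ : j ≠ (0:Fin (m+1))),
        ({ω : (Fin (m+1) → Pt) × (Sym2 (Fin (m+1)) → Bool) | dist (ω.1 0) (ω.1 j) ≤ r}
          ∩ {ω | ω.2 s(0, j) = true})ᶜ := by
      ext ω
      simp only [hT, Set.mem_setOf_eq, Set.mem_iInter, Set.mem_compl_iff, Set.mem_inter_iff,
        not_and]
    rw [this]
    exact MeasurableSet.iInter fun j => MeasurableSet.iInter fun _ => ((hd j).inter (hb j)).compl
  rw [hSeq]
  have hμ : μgraph (m+1) p T = ∫⁻ x, ENNReal.ofReal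
      (∏ j : Fin (m+1), if j ≠ (0:Fin (m+1)) ∧ dist (x 0) (x j) ≤ r then 1 - p else 1)
      ∂(Measure.pi fun _ : Fin (m+1) => volume.restrict S0) := by
    rw [μgraph, Measure.prod_apply hTm]
    refine lintegral_congr fun x => ?_
    have hpre : Prod.mk x ⁻¹' T = {b : Sym2 (Fin (m+1)) → Bool |
        ∀ j : Fin (m+1), j ≠ 0 → ¬ (dist (x 0) (x j) ≤ r ∧ b s(0, j) = true)} := rfl
    rw [hpre, bern_pi_event m r hp0.le hp1 x]
  -- Fubini over positions
  have hmp := measurePreserving_piFinSuccAbove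
    (fun _ : Fin (m+1) => (volume.restrict S0 : Measure Pt)) 0
  have hemb := (MeasurableEquiv.piFinSuccAbove (fun _ : Fin (m+1) => Pt) 0).measurableEmbedding
  set F : Pt × (Fin m → Pt) → ℝ≥0∞ := fun q =>
    ENNReal.ofReal (∏ j : Fin m, if dist q.1 (q.2 j) ≤ r then 1 - p else 1) with hF
  have hFmeas : Measurable F := by
    apply Measurable.ennreal_ofReal
    refine Finset.measurable_prod Finset.univ fun j _ => ?_
    refine Measurable.ite ?_ measurable_const measurable_const
    exact measurableSet_le (by fun_prop) measurable_const
  have hcomp := hmp.lintegral_comp_emb hemb (f := F)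
  have hintegrand : ∀ x : Fin (m+1) → Pt,
      ENNReal.ofReal
        (∏ j : Fin (m+1), if j ≠ (0:Fin (m+1)) ∧ dist (x 0) (x j) ≤ r then 1 - p else 1)
      = F ((MeasurableEquiv.piFinSuccAbove (fun _ : Fin (m+1) => Pt) 0) x) := by
    intro x
    rw [hF]
    simp only [MeasurableEquiv.piFinSuccAbove_apply]
    congr 1
    rw [Fin.prod_univ_succAbove
      (fun j : Fin (m+1) => if j ≠ (0:Fin (m+1)) ∧ dist (x 0) (x j) ≤ r then 1 - p else 1) 0]
    simp only [ne_eq, not_true_eq_false, false_and, if_false, one_mul]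
    refine Finset.prod_congr rfl fun j _ => ?_
    simp [Fin.succ_ne_zero, Fin.tail]
  have hinner : ∀ a : Pt,
      (∫⁻ y, F (a, y) ∂(Measure.pi fun _ : Fin m => (volume.restrict S0 : Measure Pt)))
        = ENNReal.ofReal ((1 - p * nu (closedBall a r)) ^ m) := by
    intro a
    have hpos : ∀ y : Fin m → Pt, F (a, y)
        = ∏ j : Fin m, (if dist a (y j) ≤ r then ENNReal.ofReal (1 - p) else 1) := by
      intro y
      rw [hF]
      show ENNReal.ofReal (∏ j : Fin m, if dist a (y j) ≤ r then 1 - p else 1) = _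
      rw [ENNReal.ofReal_prod_of_nonneg (fun j _ => by by_cases h : dist a (y j) ≤ r <;> simp [h] <;> linarith)]
      refine Finset.prod_congr rfl fun j _ => ?_
      by_cases h : dist a (y j) ≤ r <;> simp [h]
    simp_rw [hpos]
    rw [lintegral_pi_pow (volume.restrict S0) m
      (fun y => if dist a y ≤ r then ENNReal.ofReal (1 - p) else 1)
      (Measurable.ite (measurableSet_le (measurable_dist.comp
        (measurable_const.prodMk measurable_id)) measurable_const)
        measurable_const measurable_const)]
    rw [lintegral_g r hp0.le hp1 a]
    rw [← ENNReal.ofReal_pow (by nlinarith [nu_nonneg (closedBall a r), nu_le_one (closedBall a r)])]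
  have key : μgraph (m+1) p T
      = ∫⁻ a, ENNReal.ofReal ((1 - p * nu (closedBall a r)) ^ m) ∂(volume.restrict S0) := by
    rw [hμ]
    simp_rw [hintegrand]
    rw [hcomp, lintegral_prod F hFmeas.aemeasurable]
    exact lintegral_congr hinner
  rw [key]
  have hrhsm : ∀ X : Pt, (1 - nu (closedBall X r) * p) ^ (m + 1 - 1)
      = (1 - p * nu (closedBall X r)) ^ m := by
    intro X
    rw [Nat.add_sub_cancel, mul_comm]
  simp_rw [hrhsm]
  rw [integral_eq_lintegral_of_nonneg_ae
    (Filter.Eventually.of_forall fun a => pow_nonneg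
      (by nlinarith [nu_nonneg (closedBall a r), nu_le_one (closedBall a r)]) m)
    ((((measurable_nu_cb r).const_mul p).const_sub 1).pow_const m).aestronglyMeasurable]

end
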